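/- arXiv:1804.00130 — 8 statements merged into one kernel-verified Lean document; each statement's English description precedes it below -/
import Mathlib

section
/- Suppose A satisfies the restricted orthogonality property bound: |⟨Ax, Ax'⟩| ≤ θ‖x‖‖x'‖ for all disjointly supported x with ‖x‖₀ ≤ s and x' with ‖x'‖₀ ≤ s'. Then for any positive integer a, and any disjointly supported x with ‖x‖₀ ≤ s and z with ‖z‖₀ ≤ a·s', one has |⟨Ax, Az⟩| ≤ √a · θ ‖x‖‖z‖. That is, θ_{s,as'} ≤ √a · θ_{s,s'}. -/
open Finset

/-- ℓ2 norm of a vector. -/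
noncomputable def l2 {n : ℕ} (v : Fin n → ℝ) : ℝ := Real.sqrt (∑ i, v i ^ 2)

/-- ℓ1 norm of a vector. -/
noncomputable def l1 {n : ℕ} (v : Fin n → ℝ) : ℝ := ∑ i, |v i|

/-- number of nonzero entries (ℓ0 "norm"). -/
noncomputable def spars {n : ℕ} (v : Fin n → ℝ) : ℕ := Set.ncard {i | v i ≠ 0}

/-- restriction of a vector to an index set (zero off the set). -/
def restr {n : ℕ} (S : Finset (Fin n)) (v : Fin n → ℝ) : Fin n → ℝ :=
  fun i => if i ∈ S then v i else 0

lemma l2_nonneg {n : ℕ} (v : Fin n → ℝ) : 0 ≤ l2 v := Real.sqrt_nonneg _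

lemma l2_sq {n : ℕ} (v : Fin n → ℝ) : l2 v ^ 2 = ∑ i, v i ^ 2 := by
  rw [l2, Real.sq_sqrt]; positivity

lemma spars_restr_le {n : ℕ} (S : Finset (Fin n)) (v : Fin n → ℝ) :
    spars (restr S v) ≤ S.card := by
  rw [spars, ← Set.ncard_coe_finset]
  apply Set.ncard_le_ncard _ S.finite_toSet
  intro i hi
  simp only [Set.mem_setOf_eq, restr] at hi
  rcases Decidable.em (i ∈ S) with h | h
  · exact Finset.mem_coe.mpr h
  · simp [h] at hi

lemma key_ineq (a p q r : ℝ) (ha : 0 ≤ a) (hp : 0 ≤ p) (hq : 0 ≤ q) (hr : 0 ≤ r)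
    (hr2 : r ^ 2 = p ^ 2 + q ^ 2) : p + Real.sqrt a * q ≤ Real.sqrt (a + 1) * r := by
  have hsa := Real.sq_sqrt ha
  have hsb := Real.sq_sqrt (by linarith : (0:ℝ) ≤ a + 1)
  have h1 : 0 ≤ Real.sqrt a := Real.sqrt_nonneg a
  have h2 : 0 ≤ Real.sqrt (a + 1) := Real.sqrt_nonneg _
  have hsq : (p + Real.sqrt a * q) ^ 2 ≤ (Real.sqrt (a + 1) * r) ^ 2 := by
    nlinarith [sq_nonneg (Real.sqrt a * p - q)]
  calc p + Real.sqrt a * q = Real.sqrt ((p + Real.sqrt a * q) ^ 2) :=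
        (Real.sqrt_sq (by positivity)).symm
    _ ≤ Real.sqrt ((Real.sqrt (a + 1) * r) ^ 2) := Real.sqrt_le_sqrt hsq
    _ = Real.sqrt (a + 1) * r := Real.sqrt_sq (by positivity)

lemma aux1 {M N : ℕ} (A : Matrix (Fin M) (Fin N) ℝ) (s s' : ℕ) (θ : ℝ) (hθ : 0 ≤ θ)
    (hROC : ∀ x x' : Fin N → ℝ, (∀ i, x i = 0 ∨ x' i = 0) →
      spars x ≤ s → spars x' ≤ s' →
      |∑ j, A.mulVec x j * A.mulVec x' j| ≤ θ * l2 x * l2 x')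
    (x : Fin N → ℝ) (hx : spars x ≤ s) :
    ∀ (a : ℕ) (z : Fin N → ℝ), (∀ i, x i = 0 ∨ z i = 0) → spars z ≤ a * s' →
      |∑ j, A.mulVec x j * A.mulVec z j| ≤ Real.sqrt a * θ * l2 x * l2 z := by
  intro a
  induction a with
  | zero =>
    intro z hd hz
    simp only [Nat.zero_mul, Nat.le_zero] at hz
    have hz0 : ∀ i, z i = 0 := by
      have he : {i | z i ≠ 0} = ∅ := by
        rw [← Set.ncard_eq_zero (Set.toFinite _)]
        exact hz
      intro i
      by_contra h
      exact absurd he (Set.nonempty_iff_ne_empty.mp ⟨i, h⟩)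
    have hzz : z = 0 := funext hz0
    subst hzz
    simp [Matrix.mulVec_zero, l2]
  | succ a ih =>
    intro z hd hz
    classical
    set T : Finset (Fin N) := univ.filter (fun i => z i ≠ 0) with hTdef
    have hT : spars z = T.card := by
      rw [spars, ← Set.ncard_coe_finset]
      congr 1
      ext i
      simp [hTdef]
    obtain ⟨S, hST, hScard⟩ := T.exists_subset_card_eq (n := min T.card s') (min_le_left _ _)
    set z₁ := restr S z with hz1def
    set z₂ := restr (T \ S) z with hz2def
    have hpt : ∀ i, z i = z₁ i + z₂ i ∧ z i ^ 2 = z₁ i ^ 2 + z₂ i ^ 2 := by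
      intro i
      by_cases hS : i ∈ S
      · have hTS : i ∉ T \ S := by simp [hS]
        simp [hz1def, hz2def, restr, hS, hTS]
      · by_cases hiT : i ∈ T
        · have hTS : i ∈ T \ S := by simp [hiT, hS]
          simp [hz1def, hz2def, restr, hS, hTS]
        · have hz0 : z i = 0 := by
            by_contra h
            exact hiT (by simp [hTdef, h])
          have hTS : i ∉ T \ S := by simp [hiT]
          simp [hz1def, hz2def, restr, hS, hTS, hz0]
    have hz_eq : z = z₁ + z₂ := funext fun i => (hpt i).1
    have hs1 : spars z₁ ≤ s' := by
      calc spars z₁ ≤ S.card := spars_restr_le _ _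
        _ = min T.card s' := hScard
        _ ≤ s' := min_le_right _ _
    have hs2 : spars z₂ ≤ a * s' := by
      have h1 : (T \ S).card = T.card - S.card := card_sdiff_of_subset hST
      have h2 : T.card ≤ (a + 1) * s' := by rw [← hT]; exact hz
      calc spars z₂ ≤ (T \ S).card := spars_restr_le _ _
        _ ≤ a * s' := by
            have h3 : (a + 1) * s' = a * s' + s' := by ring
            rw [h1, hScard]; omega
    have hd1 : ∀ i, x i = 0 ∨ z₁ i = 0 := by
      intro i
      rcases hd i with h | h
      · exact Or.inl h
      · exact Or.inr (by simp [hz1def, restr, h])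
    have hd2 : ∀ i, x i = 0 ∨ z₂ i = 0 := by
      intro i
      rcases hd i with h | h
      · exact Or.inl h
      · exact Or.inr (by simp [hz2def, restr, h])
    have b1 := hROC x z₁ hd1 hx hs1
    have b2 := ih z₂ hd2 hs2
    have hsplit : ∑ j, A.mulVec x j * A.mulVec z j =
        (∑ j, A.mulVec x j * A.mulVec z₁ j) + ∑ j, A.mulVec x j * A.mulVec z₂ j := by
      rw [hz_eq, Matrix.mulVec_add, ← Finset.sum_add_distrib]
      congr 1
      ext j
      simp [Pi.add_apply, mul_add]
    have hl2 : (l2 z) ^ 2 = (l2 z₁) ^ 2 + (l2 z₂) ^ 2 := by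
      rw [l2_sq, l2_sq, l2_sq, ← Finset.sum_add_distrib]
      exact Finset.sum_congr rfl fun i _ => (hpt i).2
    have hkey : l2 z₁ + Real.sqrt a * l2 z₂ ≤ Real.sqrt (a + 1) * l2 z :=
      key_ineq a (l2 z₁) (l2 z₂) (l2 z) (by positivity) (l2_nonneg _) (l2_nonneg _)
        (l2_nonneg _) hl2
    have hc : 0 ≤ θ * l2 x := mul_nonneg hθ (l2_nonneg _)
    have hsa : 0 ≤ Real.sqrt a := Real.sqrt_nonneg _
    calc |∑ j, A.mulVec x j * A.mulVec z j|
        ≤ |∑ j, A.mulVec x j * A.mulVec z₁ j| + |∑ j, A.mulVec x j * A.mulVec z₂ j| := by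
          rw [hsplit]; exact abs_add_le _ _
      _ ≤ θ * l2 x * l2 z₁ + Real.sqrt a * θ * l2 x * l2 z₂ := by linarith
      _ ≤ Real.sqrt ((a : ℝ) + 1) * θ * l2 x * l2 z := by nlinarith [mul_le_mul_of_nonneg_left hkey hc]
      _ = Real.sqrt ((a : ℕ) + 1 : ℕ) * θ * l2 x * l2 z := by push_cast; ring_nf
  -- end

/-- θ_{s,as'} ≤ √a · θ_{s,s'}. -/
theorem stmt1 {M N : ℕ} (A : Matrix (Fin M) (Fin N) ℝ) (s s' : ℕ) (θ : ℝ)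
    (hROC : ∀ x x' : Fin N → ℝ, (∀ i, x i = 0 ∨ x' i = 0) →
      spars x ≤ s → spars x' ≤ s' →
      |∑ j, A.mulVec x j * A.mulVec x' j| ≤ θ * l2 x * l2 x')
    (a : ℕ) (ha : 1 ≤ a) (hsize : s + a * s' ≤ N)
    (x z : Fin N → ℝ) (hdisj : ∀ i, x i = 0 ∨ z i = 0)
    (hx : spars x ≤ s) (hz : spars z ≤ a * s') :
    |∑ j, A.mulVec x j * A.mulVec z j| ≤ Real.sqrt a * θ * l2 x * l2 z := by
  by_cases hx0 : x = 0
  · subst hx0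
    simp [Matrix.mulVec_zero, l2]
  by_cases hz0 : z = 0
  · subst hz0
    simp [Matrix.mulVec_zero, l2]
  -- derive θ ≥ 0
  have hxex : ∃ i, x i ≠ 0 := by
    by_contra h
    push_neg at h
    exact hx0 (funext h)
  have hzex : ∃ i, z i ≠ 0 := by
    by_contra h
    push_neg at h
    exact hz0 (funext h)
  obtain ⟨i1, hi1⟩ := hxex
  obtain ⟨i0, hi0⟩ := hzex
  have hs'pos : 1 ≤ s' := by
    have h1 : 0 < spars z := by
      rw [spars]
      exact (Set.ncard_pos (Set.toFinite _)).mpr ⟨i0, hi0⟩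
    have := lt_of_lt_of_le h1 hz
    rcases Nat.eq_zero_or_pos s' with h | h
    · simp [h] at this
    · exact h
  set x' := restr {i0} z with hx'def
  have hdx' : ∀ i, x i = 0 ∨ x' i = 0 := by
    intro i
    by_cases h : i = i0
    · subst h
      rcases hdisj i with h | h
      · exact Or.inl h
      · exact absurd h hi0
    · exact Or.inr (by simp [hx'def, restr, h])
  have hsx' : spars x' ≤ s' :=
    le_trans (le_trans (spars_restr_le _ _) (by simp)) hs'pos
  have hb := hROC x x' hdx' hx hsx'
  have hlx : 0 < l2 x := by
    rw [l2]
    apply Real.sqrt_pos.mpr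
    apply Finset.sum_pos' (fun i _ => sq_nonneg _)
    exact ⟨i1, mem_univ _, by positivity⟩
  have hlx' : 0 < l2 x' := by
    rw [l2]
    apply Real.sqrt_pos.mpr
    apply Finset.sum_pos' (fun i _ => sq_nonneg _)
    refine ⟨i0, mem_univ _, ?_⟩
    simp only [hx'def, restr, Finset.mem_singleton, if_pos rfl]
    positivity
  have hθ : 0 ≤ θ := by
    have h0 : 0 ≤ θ * l2 x * l2 x' := le_trans (abs_nonneg _) hb
    nlinarith [mul_pos hlx hlx']
  exact aux1 A s s' θ hθ hROC x hx a z hdisj hz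
end

section
/- Let y = Ax + e with ‖x‖₀ ≤ s₁. Let S ⊆ {1,…,N} with |S| = s₂, and define x̄ by x̄_S = A_S† y (the least-squares solution on columns S) and x̄ = 0 off S. If A satisfies RIP of order s₁+s₂ with constant δ_{s₁+s₂} < 1, then ‖(x - x̄)_S‖₂ ≤ δ_{s₁+s₂}‖x - x̄‖₂ + √(1+δ_{s₂})‖e‖₂. -/
open Finset

lemma spars_le_card {n : ℕ} (v : Fin n → ℝ) (T : Finset (Fin n))
    (h : ∀ i, v i ≠ 0 → i ∈ T) : spars v ≤ T.card := by
  rw [spars, ← Set.ncard_coe_finset]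
  exact Set.ncard_le_ncard (fun i hi => h i hi) T.finite_toSet

lemma sum_add_sq {n : ℕ} (a b : Fin n → ℝ) :
    ∑ i, (a i + b i) ^ 2 = ∑ i, a i ^ 2 + 2 * ∑ i, a i * b i + ∑ i, b i ^ 2 := by
  rw [Finset.mul_sum, ← Finset.sum_add_distrib, ← Finset.sum_add_distrib]
  exact Finset.sum_congr rfl fun i _ => by ring

lemma sum_sub_sq {n : ℕ} (a b : Fin n → ℝ) :
    ∑ i, (a i - b i) ^ 2 = ∑ i, a i ^ 2 - 2 * ∑ i, a i * b i + ∑ i, b i ^ 2 := by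
  rw [Finset.mul_sum, sub_eq_add_neg (∑ i, a i ^ 2), ← Finset.sum_neg_distrib,
    ← Finset.sum_add_distrib, ← Finset.sum_add_distrib]
  exact Finset.sum_congr rfl fun i _ => by ring

/-- Polarization-type consequence of RIP bounds on `u + v` and `u - v`. -/
lemma polar {M N : ℕ} (A : Matrix (Fin M) (Fin N) ℝ) (δ : ℝ) (u v : Fin N → ℝ)
    (h1 : (1 - δ) * (l2 (u + v)) ^ 2 ≤ (l2 (A.mulVec (u + v))) ^ 2)
    (h2 : (l2 (A.mulVec (u - v))) ^ 2 ≤ (1 + δ) * (l2 (u - v)) ^ 2) :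
    ∑ i, u i * v i ≤
      (∑ j, A.mulVec u j * A.mulVec v j) + δ * ((l2 u) ^ 2 + (l2 v) ^ 2) / 2 := by
  have e1 : (l2 (u + v)) ^ 2
      = ∑ i, u i ^ 2 + 2 * ∑ i, u i * v i + ∑ i, v i ^ 2 := by
    rw [l2_sq]; simpa using sum_add_sq u v
  have e2 : (l2 (u - v)) ^ 2
      = ∑ i, u i ^ 2 - 2 * ∑ i, u i * v i + ∑ i, v i ^ 2 := by
    rw [l2_sq]; simpa using sum_sub_sq u v
  have e3 : (l2 (A.mulVec (u + v))) ^ 2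
      = ∑ j, A.mulVec u j ^ 2 + 2 * ∑ j, A.mulVec u j * A.mulVec v j
        + ∑ j, A.mulVec v j ^ 2 := by
    rw [l2_sq, Matrix.mulVec_add]; simpa using sum_add_sq (A.mulVec u) (A.mulVec v)
  have e4 : (l2 (A.mulVec (u - v))) ^ 2
      = ∑ j, A.mulVec u j ^ 2 - 2 * ∑ j, A.mulVec u j * A.mulVec v j
        + ∑ j, A.mulVec v j ^ 2 := by
    rw [l2_sq, Matrix.mulVec_sub]; simpa using sum_sub_sq (A.mulVec u) (A.mulVec v)
  have eu : (l2 u) ^ 2 = ∑ i, u i ^ 2 := l2_sq u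
  have ev : (l2 v) ^ 2 = ∑ i, v i ^ 2 := l2_sq v
  rw [e1, e3] at h1
  rw [e2, e4] at h2
  rw [eu, ev]
  nlinarith [h1, h2]

theorem stmt2 {M N : ℕ} (A : Matrix (Fin M) (Fin N) ℝ)
    (x : Fin N → ℝ) (e : Fin M → ℝ) (y : Fin M → ℝ)
    (hy : y = A.mulVec x + e)
    (s₁ s₂ : ℕ) (hx : spars x ≤ s₁)
    (S : Finset (Fin N)) (hS : S.card = s₂)
    (xb : Fin N → ℝ)
    -- x̄ is supported on S and x̄_S = A_S† y, characterized by the normal equations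
    (hxbsupp : ∀ i ∉ S, xb i = 0)
    (hxbls : ∀ i ∈ S, ∑ j, A j i * (A.mulVec xb j - y j) = 0)
    (δ₁ δ₂ : ℝ) (hδ₁ : δ₁ < 1)
    (hRIP₁ : ∀ v : Fin N → ℝ, spars v ≤ s₁ + s₂ →
      (1 - δ₁) * (l2 v) ^ 2 ≤ (l2 (A.mulVec v)) ^ 2 ∧
      (l2 (A.mulVec v)) ^ 2 ≤ (1 + δ₁) * (l2 v) ^ 2)
    (hRIP₂ : ∀ v : Fin N → ℝ, spars v ≤ s₂ →
      (1 - δ₂) * (l2 v) ^ 2 ≤ (l2 (A.mulVec v)) ^ 2 ∧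
      (l2 (A.mulVec v)) ^ 2 ≤ (1 + δ₂) * (l2 v) ^ 2) :
    l2 (restr S (x - xb)) ≤ δ₁ * l2 (x - xb) + Real.sqrt (1 + δ₂) * l2 e := by
  classical
  set d : Fin N → ℝ := x - xb with hd
  set w : Fin N → ℝ := restr S d with hw
  -- support sets
  set Tx : Finset (Fin N) := Finset.univ.filter (fun i => x i ≠ 0) with hTx
  have hTxcard : Tx.card ≤ s₁ := by
    refine le_trans (le_of_eq ?_) hx
    rw [spars, ← Set.ncard_coe_finset]
    congr 1
    ext i; simp [hTx]
  set T : Finset (Fin N) := S ∪ Tx with hT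
  have hTcard : T.card ≤ s₁ + s₂ := by
    calc T.card ≤ S.card + Tx.card := Finset.card_union_le _ _
    _ ≤ s₂ + s₁ := by omega
    _ = s₁ + s₂ := by omega
  have hdsupp : ∀ i, d i ≠ 0 → i ∈ T := by
    intro i hi
    by_cases hiS : i ∈ S
    · exact Finset.mem_union_left _ hiS
    · refine Finset.mem_union_right _ ?_
      simp only [hTx, Finset.mem_filter, Finset.mem_univ, true_and]
      intro hxi
      exact hi (by simp [hd, Pi.sub_apply, hxi, hxbsupp i hiS])
  have hwsupp : ∀ i, w i ≠ 0 → i ∈ S := by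
    intro i hi
    by_contra hiS
    exact hi (by simp [hw, restr, hiS])
  have hwT : ∀ i, w i ≠ 0 → i ∈ T := fun i hi => Finset.mem_union_left _ (hwsupp i hi)
  have hspars_d : spars d ≤ s₁ + s₂ := le_trans (spars_le_card d T hdsupp) hTcard
  have hspars_w : spars w ≤ s₂ := hS ▸ spars_le_card w S hwsupp
  -- ⟨w, d⟩ = ‖w‖²
  have hwd : ∑ i, w i * d i = (l2 w) ^ 2 := by
    rw [l2_sq]
    refine Finset.sum_congr rfl fun i _ => ?_
    by_cases hi : i ∈ S <;> simp [hw, restr, hi, sq]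
  -- normal equations: ⟨Aw, Ad + e⟩ = 0
  have hkey : ∑ j, A.mulVec w j * (A.mulVec d j + e j) = 0 := by
    have hrw : ∀ j, A.mulVec d j + e j = -(A.mulVec xb j - y j) := by
      intro j
      have : A.mulVec d = A.mulVec x - A.mulVec xb := by rw [hd, Matrix.mulVec_sub]
      rw [this, hy]; simp [Pi.sub_apply, Pi.add_apply]; ring
    calc ∑ j, A.mulVec w j * (A.mulVec d j + e j)
        = ∑ j, ∑ i, A j i * w i * (A.mulVec d j + e j) := by
          refine Finset.sum_congr rfl fun j _ => ?_
          rw [Matrix.mulVec, dotProduct, Finset.sum_mul]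
      _ = ∑ i, w i * ∑ j, A j i * (A.mulVec d j + e j) := by
          rw [Finset.sum_comm]
          refine Finset.sum_congr rfl fun i _ => ?_
          rw [Finset.mul_sum]
          exact Finset.sum_congr rfl fun j _ => by ring
      _ = 0 := by
          refine Finset.sum_eq_zero fun i _ => ?_
          by_cases hi : i ∈ S
          · have := hxbls i hi
            have h0 : ∑ j, A j i * (A.mulVec d j + e j)
                = -∑ j, A j i * (A.mulVec xb j - y j) := by
              rw [← Finset.sum_neg_distrib]
              exact Finset.sum_congr rfl fun j _ => by rw [hrw j]; ring
            rw [h0, this, neg_zero, mul_zero]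
          · have : w i = 0 := by
              by_contra h; exact hi (hwsupp i h)
            rw [this, zero_mul]
  have hAwAd : ∑ j, A.mulVec w j * A.mulVec d j = -∑ j, A.mulVec w j * e j := by
    have : ∑ j, A.mulVec w j * A.mulVec d j + ∑ j, A.mulVec w j * e j = 0 := by
      rw [← Finset.sum_add_distrib, ← hkey]
      exact Finset.sum_congr rfl fun j _ => by ring
    linarith
  -- trivial case: d = 0
  by_cases hd0 : ∀ i, d i = 0
  · have hweq : w = 0 := by
      funext i; simp [hw, restr, hd0 i]
    have hdeq : (x - xb) = d := rfl
    have h1 : l2 w = 0 := by simp [hweq, l2]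
    have h2 : l2 d = 0 := by
      have : d = 0 := funext hd0
      simp [this, l2]
    rw [h1, h2, mul_zero, zero_add]
    exact mul_nonneg (Real.sqrt_nonneg _) (l2_nonneg _)
  push_neg at hd0
  obtain ⟨i₀, hi₀⟩ := hd0
  have hld_pos : 0 < l2 d := by
    rw [l2, Real.sqrt_pos]
    exact Finset.sum_pos' (fun i _ => sq_nonneg _)
      ⟨i₀, Finset.mem_univ _, by positivity⟩
  -- δ₁ ≥ 0
  have hδ₁0 : 0 ≤ δ₁ := by
    obtain ⟨ha, hb⟩ := hRIP₁ d hspars_d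
    have hL : 0 < (l2 d) ^ 2 := by positivity
    nlinarith [ha, hb, hL]
  by_cases hw0 : ∀ i, w i = 0
  · have : l2 w = 0 := by
      have : w = 0 := funext hw0
      simp [this, l2]
    rw [this]
    exact add_nonneg (mul_nonneg hδ₁0 (l2_nonneg _))
      (mul_nonneg (Real.sqrt_nonneg _) (l2_nonneg _))
  push_neg at hw0
  obtain ⟨i₁, hi₁⟩ := hw0
  have hlw_pos : 0 < l2 w := by
    rw [l2, Real.sqrt_pos]
    exact Finset.sum_pos' (fun i _ => sq_nonneg _)
      ⟨i₁, Finset.mem_univ _, by positivity⟩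
  -- 1 + δ₂ ≥ 0 and ‖Aw‖ ≤ √(1+δ₂)‖w‖
  obtain ⟨_, hAw2⟩ := hRIP₂ w hspars_w
  have h1δ₂ : 0 ≤ 1 + δ₂ := by nlinarith [sq_nonneg (l2 (A.mulVec w))]
  have hAwle : l2 (A.mulVec w) ≤ Real.sqrt (1 + δ₂) * l2 w := by
    have : l2 (A.mulVec w) = Real.sqrt ((l2 (A.mulVec w)) ^ 2) := by
      rw [Real.sqrt_sq (l2_nonneg _)]
    rw [this]
    calc Real.sqrt ((l2 (A.mulVec w)) ^ 2) ≤ Real.sqrt ((1 + δ₂) * (l2 w) ^ 2) :=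
          Real.sqrt_le_sqrt hAw2
      _ = Real.sqrt (1 + δ₂) * l2 w := by
          rw [Real.sqrt_mul h1δ₂, Real.sqrt_sq (l2_nonneg _)]
  -- Cauchy-Schwarz: -⟨Aw, e⟩ ≤ ‖Aw‖ ‖e‖
  have hCS : -∑ j, A.mulVec w j * e j ≤ l2 (A.mulVec w) * l2 e := by
    have := Real.sum_mul_le_sqrt_mul_sqrt Finset.univ (fun j => A.mulVec w j) (fun j => -e j)
    simp only [mul_neg] at this
    rw [Finset.sum_neg_distrib] at this
    calc -∑ j, A.mulVec w j * e j
        ≤ Real.sqrt (∑ j, A.mulVec w j ^ 2) * Real.sqrt (∑ j, (-e j) ^ 2) := this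
      _ = l2 (A.mulVec w) * l2 e := by
          rw [l2, l2]
          congr 1
          congr 1
          exact Finset.sum_congr rfl fun j _ => by ring
  -- scaled polarization: ⟨w, d⟩ ≤ ⟨Aw, Ad⟩ + δ₁ ‖w‖ ‖d‖
  set t : ℝ := Real.sqrt (l2 d / l2 w) with ht
  have ht_pos : 0 < t := Real.sqrt_pos.2 (div_pos hld_pos hlw_pos)
  have ht2 : t ^ 2 = l2 d / l2 w := Real.sq_sqrt (le_of_lt (div_pos hld_pos hlw_pos))
  set u : Fin N → ℝ := t • w with hu
  set v : Fin N → ℝ := t⁻¹ • d with hv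
  have hsupp_uv1 : ∀ i, (u + v) i ≠ 0 → i ∈ T := by
    intro i hi
    by_contra hiT
    have h1 : w i = 0 := by by_contra h; exact hiT (hwT i h)
    have h2 : d i = 0 := by by_contra h; exact hiT (hdsupp i h)
    exact hi (by simp [hu, hv, h1, h2])
  have hsupp_uv2 : ∀ i, (u - v) i ≠ 0 → i ∈ T := by
    intro i hi
    by_contra hiT
    have h1 : w i = 0 := by by_contra h; exact hiT (hwT i h)
    have h2 : d i = 0 := by by_contra h; exact hiT (hdsupp i h)
    exact hi (by simp [hu, hv, h1, h2])
  have hs1 : spars (u + v) ≤ s₁ + s₂ := le_trans (spars_le_card _ T hsupp_uv1) hTcard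
  have hs2 : spars (u - v) ≤ s₁ + s₂ := le_trans (spars_le_card _ T hsupp_uv2) hTcard
  have hp := polar A δ₁ u v (hRIP₁ (u + v) hs1).1 (hRIP₁ (u - v) hs2).2
  -- rewrite the scaled quantities
  have huv : ∑ i, u i * v i = ∑ i, w i * d i := by
    refine Finset.sum_congr rfl fun i _ => ?_
    simp only [hu, hv, Pi.smul_apply, smul_eq_mul]
    field_simp
  have hAuAv : ∑ j, A.mulVec u j * A.mulVec v j = ∑ j, A.mulVec w j * A.mulVec d j := by
    rw [hu, hv, Matrix.mulVec_smul, Matrix.mulVec_smul]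
    refine Finset.sum_congr rfl fun j _ => ?_
    simp only [Pi.smul_apply, smul_eq_mul]
    field_simp
  have hlu : (l2 u) ^ 2 = t ^ 2 * (l2 w) ^ 2 := by
    rw [l2_sq, l2_sq, Finset.mul_sum]
    refine Finset.sum_congr rfl fun i _ => ?_
    simp only [hu, Pi.smul_apply, smul_eq_mul]; ring
  have hlv : (l2 v) ^ 2 = t⁻¹ ^ 2 * (l2 d) ^ 2 := by
    rw [l2_sq, l2_sq, Finset.mul_sum]
    refine Finset.sum_congr rfl fun i _ => ?_
    simp only [hv, Pi.smul_apply, smul_eq_mul]; ring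
  have hmean : ((l2 u) ^ 2 + (l2 v) ^ 2) / 2 = l2 w * l2 d := by
    have h1 : t⁻¹ ^ 2 = (l2 d / l2 w)⁻¹ := by
      rw [inv_pow, ht2]
    rw [hlu, hlv, ht2, h1]
    field_simp
    ring
  have hmean2 : δ₁ * ((l2 u) ^ 2 + (l2 v) ^ 2) / 2 = δ₁ * (l2 w * l2 d) := by
    rw [mul_div_assoc, hmean]
  rw [huv, hAuAv, hmean2, hwd, hAwAd] at hp
  -- combine
  have hfinal : (l2 w) ^ 2 ≤ Real.sqrt (1 + δ₂) * l2 w * l2 e + δ₁ * (l2 w * l2 d) := by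
    have hle : l2 (A.mulVec w) * l2 e ≤ Real.sqrt (1 + δ₂) * l2 w * l2 e :=
      mul_le_mul_of_nonneg_right hAwle (l2_nonneg e)
    calc (l2 w) ^ 2 ≤ -∑ j, A.mulVec w j * e j + δ₁ * (l2 w * l2 d) := by
          linarith only [hp]
      _ ≤ l2 (A.mulVec w) * l2 e + δ₁ * (l2 w * l2 d) := by linarith only [hCS]
      _ ≤ Real.sqrt (1 + δ₂) * l2 w * l2 e + δ₁ * (l2 w * l2 d) := by linarith only [hle]
  have hgoal : l2 w ≤ δ₁ * l2 d + Real.sqrt (1 + δ₂) * l2 e := by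
    have h2 : l2 w * l2 w ≤ l2 w * (δ₁ * l2 d + Real.sqrt (1 + δ₂) * l2 e) := by
      have hr : l2 w * (δ₁ * l2 d + Real.sqrt (1 + δ₂) * l2 e)
          = Real.sqrt (1 + δ₂) * l2 w * l2 e + δ₁ * (l2 w * l2 d) := by ring
      rw [hr]
      linarith only [hfinal]
    exact le_of_mul_le_mul_left h2 hlw_pos
  exact hgoal
end

section
/- Under the same setup (y = Ax + e, ‖x‖₀ ≤ s₁, |S| = s₂, x̄_S = A_S† y, x̄_{S^c} = 0, δ_{s₁+s₂} < 1), the ℓ₁-norm bound ‖x - x̄‖₁ ≤ √((s₁+s₂)/(1 - δ_{s₁+s₂}²)) ‖x_{S^c}‖₁ + (√((s₁+s₂)(1+δ_{s₂}))/(1-δ_{s₁+s₂})) ‖e‖₂ holds. -/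
open Finset

lemma l1_nonneg {n : ℕ} (v : Fin n → ℝ) : 0 ≤ l1 v :=
  Finset.sum_nonneg fun _ _ => abs_nonneg _

lemma eq_zero_of_l2 {n : ℕ} {v : Fin n → ℝ} (h : l2 v = 0) : v = 0 := by
  have hs : ∑ i, v i ^ 2 = 0 :=
    (Real.sqrt_eq_zero (Finset.sum_nonneg fun i _ => sq_nonneg (v i))).1 h
  funext i
  have := (Finset.sum_eq_zero_iff_of_nonneg (fun i _ => sq_nonneg (v i))).1 hs i (mem_univ i)
  exact pow_eq_zero_iff (by norm_num) |>.1 this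

lemma dot_le {n : ℕ} (u v : Fin n → ℝ) : ∑ i, u i * v i ≤ l2 u * l2 v := by
  simpa [l2] using Real.sum_mul_le_sqrt_mul_sqrt univ u v

lemma spars_le {n : ℕ} (T : Finset (Fin n)) (v : Fin n → ℝ) (h : ∀ i ∉ T, v i = 0) :
    spars v ≤ T.card := by
  unfold spars
  have hsub : {i | v i ≠ 0} ⊆ ↑T := fun i hi => by
    by_contra h'; exact hi (h i h')
  calc Set.ncard {i | v i ≠ 0} ≤ (↑T : Set (Fin n)).ncard :=
        Set.ncard_le_ncard hsub T.finite_toSet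
    _ = T.card := Set.ncard_coe_finset T

lemma l2_le_sqrt_mul {n m : ℕ} {A : Matrix (Fin m) (Fin n) ℝ} {δ : ℝ} {v : Fin n → ℝ}
    (h : l2 (A.mulVec v) ^ 2 ≤ (1 + δ) * l2 v ^ 2) :
    l2 (A.mulVec v) ≤ Real.sqrt (1 + δ) * l2 v := by
  rcases eq_or_ne (l2 v) 0 with h0 | h0
  · have hv : v = 0 := eq_zero_of_l2 h0
    subst hv
    simp [Matrix.mulVec_zero, l2]
  · have hδ : 0 ≤ 1 + δ := by
      have hv2 : 0 < l2 v ^ 2 := by positivity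
      nlinarith [sq_nonneg (l2 (A.mulVec v))]
    calc l2 (A.mulVec v) = Real.sqrt (l2 (A.mulVec v) ^ 2) :=
          (Real.sqrt_sq (l2_nonneg _)).symm
      _ ≤ Real.sqrt ((1 + δ) * l2 v ^ 2) := Real.sqrt_le_sqrt h
      _ = Real.sqrt (1 + δ) * l2 v := by
          rw [Real.sqrt_mul hδ, Real.sqrt_sq (l2_nonneg _)]

lemma l2_le_l1 {n : ℕ} (v : Fin n → ℝ) : l2 v ≤ l1 v := by
  have h : ∑ i, v i ^ 2 ≤ (∑ i, |v i|) ^ 2 := by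
    calc ∑ i, v i ^ 2 = ∑ i, |v i| ^ 2 := by simp [sq_abs]
      _ ≤ (∑ i, |v i|) ^ 2 := Finset.sum_sq_le_sq_sum_of_nonneg fun i _ => abs_nonneg _
  calc l2 v ≤ Real.sqrt ((∑ i, |v i|) ^ 2) := Real.sqrt_le_sqrt h
    _ = l1 v := Real.sqrt_sq (l1_nonneg v)

lemma l1_le_sqrt {n : ℕ} (v : Fin n → ℝ) (k : ℕ) (h : spars v ≤ k) :
    l1 v ≤ Real.sqrt k * l2 v := by
  classical
  set f : Fin n → ℝ := fun i => if v i ≠ 0 then 1 else 0 with hf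
  have h1 : l1 v = ∑ i, f i * |v i| := by
    apply Finset.sum_congr rfl; intro i _
    by_cases hvi : v i = 0 <;> simp [hf, hvi]
  have h2 : ∑ i, f i * |v i|
      ≤ Real.sqrt (∑ i, f i ^ 2) * Real.sqrt (∑ i, |v i| ^ 2) :=
    Real.sum_mul_le_sqrt_mul_sqrt univ f (fun i => |v i|)
  have h3 : ∑ i, |v i| ^ 2 = ∑ i, v i ^ 2 := by simp [sq_abs]
  have hcard : spars v = (univ.filter fun i => v i ≠ 0).card := by
    unfold spars
    rw [← Set.ncard_coe_finset]
    congr 1; ext i; simp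
  have h4 : ∑ i, f i ^ 2 = ((univ.filter fun i => v i ≠ 0).card : ℝ) := by
    rw [Finset.card_filter]
    push_cast
    apply Finset.sum_congr rfl
    intro i _
    by_cases hvi : v i = 0 <;> simp [hf, hvi]
  have h5 : Real.sqrt (∑ i, f i ^ 2) ≤ Real.sqrt k := by
    rw [h4]
    apply Real.sqrt_le_sqrt
    rw [← hcard] at *
    exact_mod_cast h
  calc l1 v = ∑ i, f i * |v i| := h1
    _ ≤ Real.sqrt (∑ i, f i ^ 2) * Real.sqrt (∑ i, |v i| ^ 2) := h2
    _ = Real.sqrt (∑ i, f i ^ 2) * l2 v := by rw [h3]; rfl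
    _ ≤ Real.sqrt k * l2 v := mul_le_mul_of_nonneg_right h5 (l2_nonneg v)

lemma l2_expand_add {n : ℕ} (u v : Fin n → ℝ) :
    l2 (u + v) ^ 2 = l2 u ^ 2 + 2 * (∑ i, u i * v i) + l2 v ^ 2 := by
  have h : ∀ i, (u i + v i) ^ 2 = u i ^ 2 + 2 * (u i * v i) + v i ^ 2 := fun i => by ring
  simp only [l2_sq, Pi.add_apply, h, Finset.sum_add_distrib, Finset.mul_sum]

lemma l2_expand_sub {n : ℕ} (u v : Fin n → ℝ) :
    l2 (u - v) ^ 2 = l2 u ^ 2 - 2 * (∑ i, u i * v i) + l2 v ^ 2 := by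
  have h : ∀ i, (u i - v i) ^ 2 = u i ^ 2 + (-2) * (u i * v i) + v i ^ 2 := fun i => by ring
  have h2 : l2 (u - v) ^ 2 = l2 u ^ 2 + (-2) * (∑ i, u i * v i) + l2 v ^ 2 := by
    simp only [l2_sq, Pi.sub_apply, h, Finset.sum_add_distrib, Finset.mul_sum]
  linarith

lemma l2_smul {n : ℕ} (c : ℝ) (v : Fin n → ℝ) : l2 (c • v) ^ 2 = c ^ 2 * l2 v ^ 2 := by
  simp only [l2_sq, Pi.smul_apply, smul_eq_mul, mul_pow, Finset.mul_sum]

lemma cross_half {m n : ℕ} (A : Matrix (Fin m) (Fin n) ℝ) (δ : ℝ) (s : ℕ)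
    (hRIP : ∀ v : Fin n → ℝ, spars v ≤ s →
      (1 - δ) * (l2 v) ^ 2 ≤ (l2 (A.mulVec v)) ^ 2 ∧
      (l2 (A.mulVec v)) ^ 2 ≤ (1 + δ) * (l2 v) ^ 2)
    (T : Finset (Fin n)) (hT : T.card ≤ s)
    (u v : Fin n → ℝ) (hu : ∀ i ∉ T, u i = 0) (hv : ∀ i ∉ T, v i = 0) :
    (∑ i, u i * v i) - (∑ j, A.mulVec u j * A.mulVec v j)
      ≤ δ * (l2 u ^ 2 + l2 v ^ 2) / 2 := by
  have hp : spars (u + v) ≤ s := le_trans (spars_le T _ (fun i hi => by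
    simp [hu i hi, hv i hi])) hT
  have hq : spars (u - v) ≤ s := le_trans (spars_le T _ (fun i hi => by
    simp [hu i hi, hv i hi])) hT
  have h1 := (hRIP (u + v) hp).1
  have h2 := (hRIP (u - v) hq).2
  have e1 := l2_expand_add u v
  have e2 := l2_expand_sub u v
  have e3 : l2 (A.mulVec (u + v)) ^ 2
      = l2 (A.mulVec u) ^ 2 + 2 * (∑ j, A.mulVec u j * A.mulVec v j) + l2 (A.mulVec v) ^ 2 := by
    rw [Matrix.mulVec_add]; exact l2_expand_add _ _
  have e4 : l2 (A.mulVec (u - v)) ^ 2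
      = l2 (A.mulVec u) ^ 2 - 2 * (∑ j, A.mulVec u j * A.mulVec v j) + l2 (A.mulVec v) ^ 2 := by
    rw [Matrix.mulVec_sub]; exact l2_expand_sub _ _
  rw [e1, e3] at h1
  rw [e2, e4] at h2
  nlinarith [h1, h2]

lemma cross {m n : ℕ} (A : Matrix (Fin m) (Fin n) ℝ) (δ : ℝ) (s : ℕ)
    (hRIP : ∀ v : Fin n → ℝ, spars v ≤ s →
      (1 - δ) * (l2 v) ^ 2 ≤ (l2 (A.mulVec v)) ^ 2 ∧
      (l2 (A.mulVec v)) ^ 2 ≤ (1 + δ) * (l2 v) ^ 2)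
    (T : Finset (Fin n)) (hT : T.card ≤ s)
    (u v : Fin n → ℝ) (hu : ∀ i ∉ T, u i = 0) (hv : ∀ i ∉ T, v i = 0) :
    (∑ i, u i * v i) - (∑ j, A.mulVec u j * A.mulVec v j) ≤ δ * l2 u * l2 v := by
  rcases eq_or_ne (l2 u) 0 with h0 | h0
  · have := eq_zero_of_l2 h0
    subst this
    simp [Matrix.mulVec_zero, h0]
  rcases eq_or_ne (l2 v) 0 with h1 | h1
  · have := eq_zero_of_l2 h1
    subst this
    simp [Matrix.mulVec_zero, h1]
  have ha : 0 < l2 u := lt_of_le_of_ne (l2_nonneg u) (Ne.symm h0)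
  have hb : 0 < l2 v := lt_of_le_of_ne (l2_nonneg v) (Ne.symm h1)
  set c : ℝ := Real.sqrt (l2 v / l2 u) with hc
  have hcpos : 0 < c := Real.sqrt_pos.2 (by positivity)
  have hc2 : c ^ 2 = l2 v / l2 u := Real.sq_sqrt (by positivity)
  have hu' : ∀ i ∉ T, (c • u) i = 0 := fun i hi => by simp [hu i hi]
  have hv' : ∀ i ∉ T, (c⁻¹ • v) i = 0 := fun i hi => by simp [hv i hi]
  have H := cross_half A δ s hRIP T hT (c • u) (c⁻¹ • v) hu' hv'
  have d1 : ∑ i, (c • u) i * (c⁻¹ • v) i = ∑ i, u i * v i := by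
    apply Finset.sum_congr rfl
    intro i _
    simp only [Pi.smul_apply, smul_eq_mul]
    field_simp
  have d2 : ∑ j, A.mulVec (c • u) j * A.mulVec (c⁻¹ • v) j
      = ∑ j, A.mulVec u j * A.mulVec v j := by
    rw [Matrix.mulVec_smul, Matrix.mulVec_smul]
    apply Finset.sum_congr rfl
    intro j _
    simp only [Pi.smul_apply, smul_eq_mul]
    field_simp
  have d3 : l2 (c • u) ^ 2 = c ^ 2 * l2 u ^ 2 := l2_smul c u
  have d4 : l2 (c⁻¹ • v) ^ 2 = (c⁻¹) ^ 2 * l2 v ^ 2 := l2_smul _ v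
  rw [d1, d2, d3, d4] at H
  have hinv : (c⁻¹) ^ 2 = l2 u / l2 v := by
    rw [inv_pow, hc2]
    field_simp
  rw [hc2, hinv] at H
  calc (∑ i, u i * v i) - (∑ j, A.mulVec u j * A.mulVec v j)
      ≤ δ * (l2 v / l2 u * l2 u ^ 2 + l2 u / l2 v * l2 v ^ 2) / 2 := H
    _ = δ * l2 u * l2 v := by field_simp; ring


lemma alg_bound {D β c w0 a : ℝ} (hD0 : 0 ≤ D) (hD1 : D < 1) (hβ : 0 ≤ β)
    (hc : 0 ≤ c) (hw : 0 ≤ w0) (ha : 0 ≤ a)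
    (h1 : a ≤ D * c + β) (h2 : c ^ 2 = a ^ 2 + w0 ^ 2) :
    c ≤ w0 / Real.sqrt (1 - D ^ 2) + β / (1 - D) := by
  have hs2 : (0:ℝ) < 1 - D ^ 2 := by nlinarith
  set s0 : ℝ := Real.sqrt (1 - D ^ 2) with hs0def
  have hs0pos : 0 < s0 := Real.sqrt_pos.2 hs2
  have hs0sq : s0 ^ 2 = 1 - D ^ 2 := Real.sq_sqrt hs2.le
  by_cases hp : (1 - D) * c - β ≤ 0
  · have hx1 : c ≤ β / (1 - D) := by rw [le_div_iff₀ (by linarith)]; linarith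
    have hx2 : 0 ≤ w0 / s0 := div_nonneg hw hs0pos.le
    linarith
  · push_neg at hp
    set p : ℝ := (1 - D) * c - β with hpdef
    have ha2 : a ^ 2 ≤ (D * c + β) ^ 2 := by nlinarith
    have hkey : p * ((1 + D) * c + β) ≤ w0 ^ 2 := by nlinarith
    have hh2 : (1 + D) * p ^ 2 ≤ (1 - D) * w0 ^ 2 := by
      have hfac : (1 + D) * p ≤ (1 - D) * ((1 + D) * c + β) := by nlinarith
      nlinarith
    set q : ℝ := (1 - D) * w0 / s0 with hqdef
    have hqnn : 0 ≤ q := div_nonneg (mul_nonneg (by linarith) hw) hs0pos.le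
    have hq2 : (1 + D) * q ^ 2 = (1 - D) * w0 ^ 2 := by
      rw [hqdef, div_pow, hs0sq]
      have h1δ : (1:ℝ) - D ^ 2 ≠ 0 := ne_of_gt hs2
      field_simp
      ring
    have hpq2 : p ^ 2 ≤ q ^ 2 := by nlinarith
    have hpq : p ≤ q := by nlinarith [sq_nonneg (p - q), sq_nonneg (p + q)]
    have hqeq : q = (1 - D) * (w0 / s0) := by rw [hqdef]; ring
    have hstep : (1 - D) * c ≤ (1 - D) * (w0 / s0) + β := by rw [← hqeq]; linarith
    have h1δ : (0:ℝ) < 1 - D := by linarith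
    rw [← sub_nonneg]
    have hgoal : w0 / s0 + β / (1 - D) - c = ((1 - D) * (w0 / s0) + β - (1 - D) * c) / (1 - D) := by
      field_simp
    rw [hgoal]
    exact div_nonneg (by linarith) h1δ.le

set_option maxHeartbeats 1000000 in
theorem stmt5 {M N : ℕ} (A : Matrix (Fin M) (Fin N) ℝ)
    (x : Fin N → ℝ) (e : Fin M → ℝ) (y : Fin M → ℝ)
    (hy : y = A.mulVec x + e)
    (s₁ s₂ : ℕ) (hx : spars x ≤ s₁)
    (S : Finset (Fin N)) (hS : S.card = s₂)
    (xb : Fin N → ℝ)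
    -- x̄ is supported on S and x̄_S = A_S† y, characterized by the normal equations
    (hxbsupp : ∀ i ∉ S, xb i = 0)
    (hxbls : ∀ i ∈ S, ∑ j, A j i * (A.mulVec xb j - y j) = 0)
    (δ₁ δ₂ : ℝ) (hδ₁ : δ₁ < 1)
    (hRIP₁ : ∀ v : Fin N → ℝ, spars v ≤ s₁ + s₂ →
      (1 - δ₁) * (l2 v) ^ 2 ≤ (l2 (A.mulVec v)) ^ 2 ∧
      (l2 (A.mulVec v)) ^ 2 ≤ (1 + δ₁) * (l2 v) ^ 2)
    (hRIP₂ : ∀ v : Fin N → ℝ, spars v ≤ s₂ →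
      (1 - δ₂) * (l2 v) ^ 2 ≤ (l2 (A.mulVec v)) ^ 2 ∧
      (l2 (A.mulVec v)) ^ 2 ≤ (1 + δ₂) * (l2 v) ^ 2) :
    l1 (x - xb) ≤ Real.sqrt ((s₁ + s₂) / (1 - δ₁ ^ 2)) * l1 (restr Sᶜ x) + (Real.sqrt ((s₁ + s₂) * (1 + δ₂)) / (1 - δ₁)) * l2 e := by
  classical
  set h : Fin N → ℝ := x - xb with hh
  by_cases hz : h = 0
  · have hL : l1 (x - xb) = 0 := by rw [← hh, hz]; simp [l1]
    rw [hL]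
    have h1 := l1_nonneg (restr Sᶜ x)
    have h2 := l2_nonneg e
    apply add_nonneg
    · exact mul_nonneg (Real.sqrt_nonneg _) h1
    · exact mul_nonneg (div_nonneg (Real.sqrt_nonneg _) (by linarith)) h2
  -- main case
  set u : Fin N → ℝ := restr S h with hudef
  set w : Fin N → ℝ := restr Sᶜ x with hwdef
  set T : Finset (Fin N) := (univ.filter (fun i => x i ≠ 0)) ∪ S with hTdef
  have hsparsx : (univ.filter (fun i => x i ≠ 0)).card = spars x := by
    unfold spars
    rw [← Set.ncard_coe_finset]
    congr 1; ext i; simp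
  have hTcard : T.card ≤ s₁ + s₂ := by
    calc T.card ≤ (univ.filter (fun i => x i ≠ 0)).card + S.card := Finset.card_union_le _ _
      _ ≤ s₁ + s₂ := by rw [hsparsx, hS]; omega
  have hhT : ∀ i ∉ T, h i = 0 := by
    intro i hi
    rw [hTdef] at hi
    simp only [Finset.mem_union, Finset.mem_filter, Finset.mem_univ, true_and, not_or,
      not_not] at hi
    obtain ⟨hx0, hiS⟩ := hi
    simp [hh, hx0, hxbsupp i hiS]
  have huS : ∀ i ∉ S, u i = 0 := fun i hi => by simp [hudef, restr, hi]
  have huT : ∀ i ∉ T, u i = 0 := fun i hi =>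
    huS i (fun hiS => hi (Finset.mem_union_right _ hiS))
  have hsh : spars h ≤ s₁ + s₂ := le_trans (spars_le T h hhT) hTcard
  have hsu : spars u ≤ s₂ := hS ▸ spars_le S u huS
  have hcne : l2 h ≠ 0 := fun h0 => hz (eq_zero_of_l2 h0)
  have hcpos : 0 < l2 h := lt_of_le_of_ne (l2_nonneg h) (Ne.symm hcne)
  obtain ⟨hA1, hA2⟩ := hRIP₁ h hsh
  have hδpos : 0 ≤ δ₁ := by nlinarith [mul_pos hcpos hcpos]
  -- normal equations
  have hAh : A.mulVec h = A.mulVec x - A.mulVec xb := by rw [hh, Matrix.mulVec_sub]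
  have key : ∀ i ∈ S, ∑ j, A j i * (A.mulVec h j + e j) = 0 := by
    intro i hi
    have h0 := hxbls i hi
    have heq : ∀ j, A j i * (A.mulVec h j + e j) = -(A j i * (A.mulVec xb j - y j)) := by
      intro j
      rw [hAh]
      simp only [Pi.sub_apply, hy, Pi.add_apply]
      ring
    rw [Finset.sum_congr rfl (fun j _ => heq j), Finset.sum_neg_distrib, h0, neg_zero]
  have orth : ∑ j, A.mulVec u j * (A.mulVec h j + e j) = 0 := by
    have swap : ∑ j, A.mulVec u j * (A.mulVec h j + e j)
        = ∑ i, u i * (∑ j, A j i * (A.mulVec h j + e j)) := by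
      simp only [Matrix.mulVec, dotProduct, Finset.sum_mul]
      rw [Finset.sum_comm]
      apply Finset.sum_congr rfl; intro i _
      rw [Finset.mul_sum]
      apply Finset.sum_congr rfl; intro j _
      ring
    rw [swap]
    apply Finset.sum_eq_zero
    intro i _
    by_cases hiS : i ∈ S
    · rw [key i hiS, mul_zero]
    · rw [huS i hiS, zero_mul]
  have duh : ∑ i, u i * h i = l2 u ^ 2 := by
    rw [l2_sq]
    apply Finset.sum_congr rfl
    intro i _
    by_cases hiS : i ∈ S
    · simp [hudef, restr, hiS]; ring
    · simp [hudef, restr, hiS]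
  have hcross := cross A δ₁ (s₁ + s₂) hRIP₁ T hTcard u h huT hhT
  have hsplit : ∑ j, A.mulVec u j * (A.mulVec h j + e j)
      = (∑ j, A.mulVec u j * A.mulVec h j) + ∑ j, A.mulVec u j * e j := by
    rw [← Finset.sum_add_distrib]
    apply Finset.sum_congr rfl; intros; ring
  have hAue : -(∑ j, A.mulVec u j * e j) ≤ l2 (A.mulVec u) * l2 e := by
    have hd := dot_le (fun j => A.mulVec u j) (fun j => -(e j))
    have hl2e : l2 (fun j => -(e j)) = l2 e := by simp [l2]
    have hsum : ∑ j, A.mulVec u j * -(e j) = -(∑ j, A.mulVec u j * e j) := by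
      rw [← Finset.sum_neg_distrib]
      apply Finset.sum_congr rfl; intros; ring
    calc -(∑ j, A.mulVec u j * e j) = ∑ j, A.mulVec u j * -(e j) := hsum.symm
      _ ≤ l2 (fun j => A.mulVec u j) * l2 (fun j => -(e j)) := hd
      _ = l2 (A.mulVec u) * l2 e := by rw [hl2e]
  have hAu2 : l2 (A.mulVec u) ≤ Real.sqrt (1 + δ₂) * l2 u := l2_le_sqrt_mul (hRIP₂ u hsu).2
  have ukey : l2 u ^ 2 ≤ δ₁ * l2 u * l2 h + Real.sqrt (1 + δ₂) * l2 e * l2 u := by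
    have h1 : ∑ j, A.mulVec u j * A.mulVec h j = -(∑ j, A.mulVec u j * e j) := by
      rw [hsplit] at orth; linarith
    have h2 : l2 (A.mulVec u) * l2 e ≤ Real.sqrt (1 + δ₂) * l2 u * l2 e :=
      mul_le_mul_of_nonneg_right hAu2 (l2_nonneg e)
    calc l2 u ^ 2 = ∑ i, u i * h i := duh.symm
      _ ≤ δ₁ * l2 u * l2 h + ∑ j, A.mulVec u j * A.mulVec h j := by linarith [hcross]
      _ = δ₁ * l2 u * l2 h + -(∑ j, A.mulVec u j * e j) := by rw [h1]
      _ ≤ δ₁ * l2 u * l2 h + l2 (A.mulVec u) * l2 e := by linarith [hAue]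
      _ ≤ δ₁ * l2 u * l2 h + Real.sqrt (1 + δ₂) * l2 e * l2 u := by nlinarith [h2]
  set a : ℝ := l2 u with hadef
  set c : ℝ := l2 h with hcdef
  set β : ℝ := Real.sqrt (1 + δ₂) * l2 e with hβdef
  have hβ : 0 ≤ β := mul_nonneg (Real.sqrt_nonneg _) (l2_nonneg e)
  have hanneg : 0 ≤ a := l2_nonneg u
  have hac : a ≤ δ₁ * c + β := by
    rcases eq_or_lt_of_le hanneg with h0 | h0
    · have : 0 ≤ δ₁ * c + β := add_nonneg (mul_nonneg hδpos hcpos.le) hβ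
      linarith
    · nlinarith [ukey, h0]
  have pyth : c ^ 2 = a ^ 2 + l2 w ^ 2 := by
    rw [hcdef, hadef, l2_sq, l2_sq, l2_sq, ← Finset.sum_add_distrib]
    apply Finset.sum_congr rfl
    intro i _
    by_cases hiS : i ∈ S
    · have hw0 : w i = 0 := by simp [hwdef, restr, Finset.mem_compl, hiS]
      have hui : u i = h i := by simp [hudef, restr, hiS]
      rw [hw0, hui]; ring
    · have hwi : w i = x i := by simp [hwdef, restr, Finset.mem_compl, hiS]
      have hui : u i = 0 := huS i hiS
      have hhi : h i = x i := by simp [hh, hxbsupp i hiS]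
      rw [hwi, hui, hhi]; ring
  have hs2 : (0:ℝ) < 1 - δ₁ ^ 2 := by nlinarith
  set s0 : ℝ := Real.sqrt (1 - δ₁ ^ 2) with hs0def
  have hs0pos : 0 < s0 := Real.sqrt_pos.2 hs2
  have hwnneg : 0 ≤ l2 w := l2_nonneg w
  have hl2bound : c ≤ l2 w / s0 + β / (1 - δ₁) :=
    alg_bound hδpos hδ₁ hβ hcpos.le hwnneg hanneg hac pyth
  have hK : (0:ℝ) ≤ ((s₁ + s₂ : ℕ) : ℝ) := Nat.cast_nonneg _
  have hl1h : l1 h ≤ Real.sqrt ((s₁ + s₂ : ℕ) : ℝ) * c := l1_le_sqrt h (s₁ + s₂) hsh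
  have hwl1 : l2 w ≤ l1 w := l2_le_l1 w
  have e1 : Real.sqrt ((s₁ + s₂ : ℕ) : ℝ) / s0 = Real.sqrt (((s₁:ℝ) + s₂) / (1 - δ₁ ^ 2)) := by
    rw [hs0def, ← Real.sqrt_div hK]
    push_cast
    ring_nf
  have e2 : Real.sqrt ((s₁ + s₂ : ℕ) : ℝ) * Real.sqrt (1 + δ₂)
      = Real.sqrt (((s₁:ℝ) + s₂) * (1 + δ₂)) := by
    rw [← Real.sqrt_mul hK]
    push_cast
    ring_nf
  have hfinal : l1 (x - xb) = l1 h := by rw [hh]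
  rw [hfinal]
  calc l1 h ≤ Real.sqrt ((s₁ + s₂ : ℕ) : ℝ) * c := hl1h
    _ ≤ Real.sqrt ((s₁ + s₂ : ℕ) : ℝ) * (l2 w / s0 + β / (1 - δ₁)) :=
        mul_le_mul_of_nonneg_left hl2bound (Real.sqrt_nonneg _)
    _ = Real.sqrt ((s₁ + s₂ : ℕ) : ℝ) / s0 * l2 w
        + Real.sqrt ((s₁ + s₂ : ℕ) : ℝ) * Real.sqrt (1 + δ₂) / (1 - δ₁) * l2 e := by
        rw [hβdef]; ring
    _ ≤ Real.sqrt (((s₁:ℝ) + s₂) / (1 - δ₁ ^ 2)) * l1 w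
        + Real.sqrt (((s₁:ℝ) + s₂) * (1 + δ₂)) / (1 - δ₁) * l2 e := by
        rw [e1, e2]
        have hnn : (0:ℝ) ≤ Real.sqrt (((s₁:ℝ) + s₂) / (1 - δ₁ ^ 2)) := Real.sqrt_nonneg _
        have := mul_le_mul_of_nonneg_left hwl1 hnn
        linarith
end

section
/- Let x, z ∈ ℝ^N with ‖x‖₀ = s₁, ‖z‖₀ = s₂ and s₂ ≥ s₁. Let S₁ be the support of x, S₂ the support of z, and let S∇ ⊆ S₂ be the set of indices of the s₂ - s₁ smallest-magnitude entries of z (within S₂). Then ‖x_{S∇}‖₁ ≤ ‖(x - z)_{S₂}‖₁ ≤ ‖x - z‖₁. -/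
open Finset

lemma l1_restr {n : ℕ} (S : Finset (Fin n)) (v : Fin n → ℝ) :
    l1 (restr S v) = ∑ i ∈ S, |v i| := by
  unfold l1 restr
  simp only [apply_ite abs, abs_zero, Finset.sum_ite_mem, Finset.univ_inter]

/-- ‖x_{S∇}‖₁ ≤ ‖(x-z)_{S₂}‖₁ ≤ ‖x-z‖₁. -/
theorem stmt6 {N : ℕ} (x z : Fin N → ℝ) (s₁ s₂ : ℕ)
    (hx : spars x = s₁) (hz : spars z = s₂) (hs : s₁ ≤ s₂)
    (S₂ : Finset (Fin N)) (hS₂ : ∀ i, i ∈ S₂ ↔ z i ≠ 0)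
    (Snab : Finset (Fin N)) (hsub : Snab ⊆ S₂) (hcard : Snab.card = s₂ - s₁)
    (hsmall : ∀ i ∈ Snab, ∀ j ∈ S₂ \ Snab, |z i| ≤ |z j|) :
    l1 (restr Snab x) ≤ l1 (restr S₂ (x - z)) ∧ l1 (restr S₂ (x - z)) ≤ l1 (x - z) := by
  classical
  constructor
  · set S₁ : Finset (Fin N) := univ.filter (fun i => x i ≠ 0) with hS₁def
    have hS₁card : S₁.card = s₁ := by
      rw [← hx]
      unfold spars
      rw [show {i | x i ≠ 0} = (S₁ : Set (Fin N)) by ext i; simp [hS₁def]]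
      exact (Set.ncard_coe_finset _).symm
    have hS₂card : S₂.card = s₂ := by
      rw [← hz]
      unfold spars
      rw [show {i | z i ≠ 0} = (S₂ : Set (Fin N)) by ext i; simp [hS₂ i]]
      exact (Set.ncard_coe_finset _).symm
    set A : Finset (Fin N) := Snab ∩ S₁ with hAdef
    set T : Finset (Fin N) := (S₂ \ Snab) \ S₁ with hTdef
    -- cardinality: |A| ≤ |T|
    have hS2S : (S₂ \ Snab).card = s₁ := by
      rw [Finset.card_sdiff_of_subset hsub, hS₂card, hcard]; omega
    have hAT : A.card ≤ T.card := by
      have h1 : T.card + ((S₂ \ Snab) ∩ S₁).card = s₁ := by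
        rw [hTdef, ← hS2S]
        exact Finset.card_sdiff_add_card_inter _ _
      have h2 : A.card + ((S₂ \ Snab) ∩ S₁).card ≤ s₁ := by
        have hdisj : Disjoint A ((S₂ \ Snab) ∩ S₁) := by
          apply Finset.disjoint_left.mpr
          intro a ha hb
          simp only [hAdef, Finset.mem_inter, Finset.mem_sdiff] at ha hb
          exact hb.1.2 ha.1
        rw [← Finset.card_union_of_disjoint hdisj]
        calc (A ∪ (S₂ \ Snab) ∩ S₁).card ≤ S₁.card :=
              Finset.card_le_card (by
                intro a ha
                rcases Finset.mem_union.mp ha with h | h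
                · exact (Finset.mem_inter.mp h).2
                · exact (Finset.mem_inter.mp h).2)
          _ = s₁ := hS₁card
      have h3 : ((S₂ \ Snab) ∩ S₁).card ≤ s₁ := le_trans (Nat.le_add_left _ _) h2
      omega
    -- sum over A of |z| ≤ sum over T of |z|
    have hzAT : ∑ i ∈ A, |z i| ≤ ∑ j ∈ T, |z j| := by
      rcases Finset.eq_empty_or_nonempty T with hT | hT
      · have hA : A = ∅ := Finset.card_eq_zero.mp (by rw [hT] at hAT; simpa using hAT)
        simp [hA, hT]
      · have hTim : (T.image (fun j => |z j|)).Nonempty := hT.image _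
        set m : ℝ := (T.image (fun j => |z j|)).min' hTim with hmdef
        obtain ⟨j₀, hj₀T, hj₀⟩ := Finset.mem_image.mp ((T.image (fun j => |z j|)).min'_mem hTim)
        have hm0 : 0 ≤ m := by rw [hmdef, ← hj₀]; exact abs_nonneg _
        have hAm : ∀ i ∈ A, |z i| ≤ m := by
          intro i hi
          rw [hmdef, ← hj₀]
          exact hsmall i (Finset.mem_inter.mp hi).1 j₀ (Finset.mem_sdiff.mp hj₀T).1
        have hmT : ∀ j ∈ T, m ≤ |z j| := by
          intro j hj
          exact Finset.min'_le _ _ (Finset.mem_image_of_mem _ hj)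
        calc ∑ i ∈ A, |z i| ≤ A.card • m := Finset.sum_le_card_nsmul A _ m hAm
          _ ≤ T.card • m := by
              rw [nsmul_eq_mul, nsmul_eq_mul]
              exact mul_le_mul_of_nonneg_right (by exact_mod_cast hAT) hm0
          _ ≤ ∑ j ∈ T, |z j| := Finset.card_nsmul_le_sum T _ m hmT
    -- main chain
    rw [l1_restr, l1_restr]
    have step1 : ∑ i ∈ Snab, |x i| = ∑ i ∈ A, |x i| := by
      refine (Finset.sum_subset (Finset.inter_subset_left) ?_).symm
      intro i hi hiA
      have : x i = 0 := by
        by_contra h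
        exact hiA (Finset.mem_inter.mpr ⟨hi, by simp [hS₁def, h]⟩)
      simp [this]
    have step2 : ∑ i ∈ A, |x i| ≤ ∑ i ∈ A, |x i - z i| + ∑ i ∈ A, |z i| := by
      rw [← Finset.sum_add_distrib]
      apply Finset.sum_le_sum
      intro i _
      calc |x i| = |(x i - z i) + z i| := by ring_nf
        _ ≤ |x i - z i| + |z i| := abs_add_le _ _
    have step3 : ∑ i ∈ A, |x i - z i| ≤ ∑ i ∈ Snab, |x i - z i| :=
      Finset.sum_le_sum_of_subset_of_nonneg (Finset.inter_subset_left)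
        (fun i _ _ => abs_nonneg _)
    have step4 : ∑ j ∈ T, |z j| = ∑ j ∈ T, |x j - z j| := by
      apply Finset.sum_congr rfl
      intro j hj
      have hx0 : x j = 0 := by
        have := (Finset.mem_sdiff.mp hj).2
        by_contra h
        exact this (by simp [hS₁def, h])
      rw [hx0, zero_sub, abs_neg]
    have step5 : ∑ j ∈ T, |x j - z j| ≤ ∑ j ∈ S₂ \ Snab, |x j - z j| :=
      Finset.sum_le_sum_of_subset_of_nonneg (Finset.sdiff_subset)
        (fun i _ _ => abs_nonneg _)
    have final : ∑ j ∈ S₂ \ Snab, (fun i => |x i - z i|) j + ∑ i ∈ Snab, (fun i => |x i - z i|) i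
        = ∑ i ∈ S₂, (fun i => |x i - z i|) i := Finset.sum_sdiff hsub
    simp only [Pi.sub_apply]
    calc ∑ i ∈ Snab, |x i| = ∑ i ∈ A, |x i| := step1
      _ ≤ ∑ i ∈ A, |x i - z i| + ∑ i ∈ A, |z i| := step2
      _ ≤ ∑ i ∈ Snab, |x i - z i| + ∑ j ∈ T, |z j| := add_le_add step3 hzAT
      _ = ∑ i ∈ Snab, |x i - z i| + ∑ j ∈ T, |x j - z j| := by rw [step4]
      _ ≤ ∑ i ∈ Snab, |x i - z i| + ∑ j ∈ S₂ \ Snab, |x j - z j| := by linarith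
      _ = ∑ i ∈ S₂, |x i - z i| := by rw [add_comm]; exact final
  · rw [l1_restr]
    unfold l1
    exact Finset.sum_le_sum_of_subset_of_nonneg (Finset.subset_univ _)
      (fun i _ _ => abs_nonneg _)
end

section
/- Let x, z ∈ ℝ^N with ‖x‖₀ = s₁, ‖z‖₀ = s₂, s₂ ≥ s₁. Let S₂ = supp(z) and let S∇ ⊆ S₂ be the indices of the s₂ - s₁ smallest-magnitude entries of z. Then ‖x_{S∇}‖₂ ≤ √2 ‖(x - z)_{S₂}‖₂ ≤ √2 ‖x - z‖₂. -/
open Finset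

lemma l2_restr_eq {n : ℕ} (S : Finset (Fin n)) (v : Fin n → ℝ) :
    l2 (restr S v) = Real.sqrt (∑ i ∈ S, v i ^ 2) := by
  unfold l2 restr
  congr 1
  have h : ∀ i : Fin n, (if i ∈ S then v i else 0) ^ 2 = if i ∈ S then v i ^ 2 else 0 := by
    intro i; split <;> simp
  simp_rw [h]
  rw [Finset.sum_ite_mem, Finset.univ_inter]

lemma sum_le_sum_of_card_eq {ι : Type*} {A B : Finset ι} (h : A.card = B.card)
    (f g : ι → ℝ) (hle : ∀ a ∈ A, ∀ b ∈ B, f a ≤ g b) :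
    ∑ a ∈ A, f a ≤ ∑ b ∈ B, g b := by
  classical
  have e : (A : Finset ι) ≃ (B : Finset ι) := Finset.equivOfCardEq h
  calc ∑ a ∈ A, f a = ∑ a ∈ A.attach, f a := (Finset.sum_attach _ _).symm
    _ ≤ ∑ a ∈ A.attach, g (e a) := by
        refine Finset.sum_le_sum ?_
        intro a _
        exact hle a a.2 (e a) (e a).2
    _ = ∑ b ∈ B.attach, g b := by
        rw [← Finset.univ_eq_attach, ← Finset.univ_eq_attach]
        exact Fintype.sum_equiv e _ _ (fun a => rfl)
    _ = ∑ b ∈ B, g b := Finset.sum_attach _ _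

/-- ‖x_{S∇}‖₂ ≤ √2‖(x-z)_{S₂}‖₂ ≤ √2‖x-z‖₂. -/
theorem stmt7 {N : ℕ} (x z : Fin N → ℝ) (s₁ s₂ : ℕ)
    (hx : spars x = s₁) (hz : spars z = s₂) (hs : s₁ ≤ s₂)
    (S₂ : Finset (Fin N)) (hS₂ : ∀ i, i ∈ S₂ ↔ z i ≠ 0)
    (Snab : Finset (Fin N)) (hsub : Snab ⊆ S₂) (hcard : Snab.card = s₂ - s₁)
    (hsmall : ∀ i ∈ Snab, ∀ j ∈ S₂ \ Snab, |z i| ≤ |z j|) :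
    l2 (restr Snab x) ≤ Real.sqrt 2 * l2 (restr S₂ (x - z)) ∧
      Real.sqrt 2 * l2 (restr S₂ (x - z)) ≤ Real.sqrt 2 * l2 (x - z) := by
  classical
  -- second inequality
  have hsecond : Real.sqrt 2 * l2 (restr S₂ (x - z)) ≤ Real.sqrt 2 * l2 (x - z) := by
    rw [l2_restr_eq]
    refine mul_le_mul_of_nonneg_left ?_ (Real.sqrt_nonneg 2)
    unfold l2
    apply Real.sqrt_le_sqrt
    exact Finset.sum_le_sum_of_subset_of_nonneg (Finset.subset_univ S₂)
      (fun i _ _ => sq_nonneg _)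
  refine ⟨?_, hsecond⟩
  -- T : indices of S₂ where x vanishes
  set T : Finset (Fin N) := S₂.filter (fun i => x i = 0) with hT
  have hTsub : T ⊆ S₂ := Finset.filter_subset _ _
  have hxT : ∀ i ∈ T, x i = 0 := fun i hi => (Finset.mem_filter.mp hi).2
  -- card of S₂
  have hS₂set : {i : Fin N | z i ≠ 0} = (S₂ : Set (Fin N)) := by
    ext i; simp [hS₂ i]
  have hS₂card : S₂.card = s₂ := by
    rw [← hz]; unfold spars; rw [hS₂set, Set.ncard_coe_finset]
  -- S₂ \ T has card ≤ s₁
  have hsdT : S₂ \ T = S₂.filter (fun i => x i ≠ 0) := by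
    ext i
    simp only [Finset.mem_sdiff, hT, Finset.mem_filter]
    tauto
  have hxset : {i : Fin N | x i ≠ 0} = ((Finset.univ.filter (fun i => x i ≠ 0) : Finset (Fin N)) : Set (Fin N)) := by
    ext i; simp
  have hxcard : (Finset.univ.filter (fun i => x i ≠ 0) : Finset (Fin N)).card = s₁ := by
    rw [← hx]; unfold spars; rw [hxset, Set.ncard_coe_finset]
  have hcompl : (S₂ \ T).card ≤ s₁ := by
    rw [hsdT, ← hxcard]
    exact Finset.card_le_card (fun i hi => by
      simp only [Finset.mem_filter] at hi ⊢
      exact ⟨Finset.mem_univ i, hi.2⟩)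
  have hTcard : s₂ - s₁ ≤ T.card := by
    have h1 : (S₂ \ T).card + T.card = S₂.card := Finset.card_sdiff_add_card_eq_card hTsub
    omega
  -- |Snab \ T| ≤ |T \ Snab|
  have hc1 : (Snab \ T).card + (Snab ∩ T).card = Snab.card :=
    Finset.card_sdiff_add_card_inter _ _
  have hc2 : (T \ Snab).card + (T ∩ Snab).card = T.card :=
    Finset.card_sdiff_add_card_inter _ _
  have hcinter : (Snab ∩ T).card = (T ∩ Snab).card := by rw [Finset.inter_comm]
  have hcle : (Snab \ T).card ≤ (T \ Snab).card := by omega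
  obtain ⟨T', hT'sub, hT'card⟩ := Finset.exists_subset_card_eq hcle
  -- key comparison of z-sums
  have hzsum : ∑ i ∈ Snab \ T, z i ^ 2 ≤ ∑ j ∈ T', z j ^ 2 := by
    refine sum_le_sum_of_card_eq hT'card.symm _ _ ?_
    intro a ha b hb
    have haS : a ∈ Snab := (Finset.mem_sdiff.mp ha).1
    have hbT : b ∈ T \ Snab := hT'sub hb
    have hbS : b ∈ S₂ \ Snab := by
      rw [Finset.mem_sdiff] at hbT ⊢
      exact ⟨hTsub hbT.1, hbT.2⟩
    have := hsmall a haS b hbS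
    calc z a ^ 2 = |z a| ^ 2 := (sq_abs _).symm
      _ ≤ |z b| ^ 2 := pow_le_pow_left₀ (abs_nonneg _) this 2
      _ = z b ^ 2 := sq_abs _
  -- on T', x vanishes, so z j ^ 2 = (x j - z j) ^ 2
  have hT'T : T' ⊆ T := hT'sub.trans (Finset.sdiff_subset)
  have hzxz : ∑ j ∈ T', z j ^ 2 = ∑ j ∈ T', (x j - z j) ^ 2 := by
    refine Finset.sum_congr rfl ?_
    intro j hj
    rw [hxT j (hT'T hj)]
    ring
  -- x-sum over Snab equals sum over Snab \ T
  have hxsum : ∑ i ∈ Snab, x i ^ 2 = ∑ i ∈ Snab \ T, x i ^ 2 := by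
    refine (Finset.sum_subset (Finset.sdiff_subset) ?_).symm
    intro i hi hni
    have : i ∈ T := by
      by_contra h
      exact hni (Finset.mem_sdiff.mpr ⟨hi, h⟩)
    rw [hxT i this]
    ring
  -- pointwise bound
  have hpt : ∀ i, x i ^ 2 ≤ 2 * (x i - z i) ^ 2 + 2 * z i ^ 2 := by
    intro i; nlinarith [sq_nonneg (x i - 2 * z i)]
  -- disjointness and subset facts for (Snab \ T) and T'
  have hdisj : Disjoint (Snab \ T) T' := by
    refine Finset.disjoint_left.mpr ?_
    intro a ha haT'
    have : a ∈ T \ Snab := hT'sub haT'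
    exact (Finset.mem_sdiff.mp this).2 (Finset.mem_sdiff.mp ha).1
  have hunion_sub : (Snab \ T) ∪ T' ⊆ S₂ := by
    intro i hi
    rcases Finset.mem_union.mp hi with h | h
    · exact hsub (Finset.mem_sdiff.mp h).1
    · exact hTsub (hT'T h)
  -- main bound on sums of squares
  have hmain : ∑ i ∈ Snab, x i ^ 2 ≤ 2 * ∑ i ∈ S₂, (x i - z i) ^ 2 := by
    calc ∑ i ∈ Snab, x i ^ 2 = ∑ i ∈ Snab \ T, x i ^ 2 := hxsum
      _ ≤ ∑ i ∈ Snab \ T, (2 * (x i - z i) ^ 2 + 2 * z i ^ 2) :=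
          Finset.sum_le_sum (fun i _ => hpt i)
      _ = 2 * ∑ i ∈ Snab \ T, (x i - z i) ^ 2 + 2 * ∑ i ∈ Snab \ T, z i ^ 2 := by
          rw [Finset.sum_add_distrib, Finset.mul_sum, Finset.mul_sum]
      _ ≤ 2 * ∑ i ∈ Snab \ T, (x i - z i) ^ 2 + 2 * ∑ j ∈ T', (x j - z j) ^ 2 := by
          rw [← hzxz]
          nlinarith [hzsum]
      _ = 2 * ∑ i ∈ (Snab \ T) ∪ T', (x i - z i) ^ 2 := by
          rw [Finset.sum_union hdisj]
          ring
      _ ≤ 2 * ∑ i ∈ S₂, (x i - z i) ^ 2 := by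
          have := Finset.sum_le_sum_of_subset_of_nonneg hunion_sub
            (fun i _ _ => sq_nonneg (x i - z i))
          linarith
  -- conclude via sqrt
  rw [l2_restr_eq, l2_restr_eq]
  have hsimp : ∑ i ∈ S₂, (x - z) i ^ 2 = ∑ i ∈ S₂, (x i - z i) ^ 2 := by
    simp [Pi.sub_apply]
  rw [hsimp]
  calc Real.sqrt (∑ i ∈ Snab, x i ^ 2)
      ≤ Real.sqrt (2 * ∑ i ∈ S₂, (x i - z i) ^ 2) := Real.sqrt_le_sqrt hmain
    _ = Real.sqrt 2 * Real.sqrt (∑ i ∈ S₂, (x i - z i) ^ 2) := Real.sqrt_mul (by norm_num) _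
end

section
/- Let x, x̂ ∈ ℝ^N, let T₀ be a set of s indices, set z = x̂ - x, and suppose that for some λ with 1/2 < λ ≤ 1 and some vector w, λ‖x̂‖₁ + (1-λ)‖x̂ - w‖₁ ≤ λ‖x‖₁ + (1-λ)‖x - w‖₁. Then ‖z_{T₀^c}‖₁ ≤ (1/(2λ-1))‖z_{T₀}‖₁ + (2λ/(2λ-1))‖x_{T₀^c}‖₁. -/
open Finset

lemma l1_split {n : ℕ} (S : Finset (Fin n)) (v : Fin n → ℝ) :
    l1 v = l1 (restr S v) + l1 (restr Sᶜ v) := by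
  unfold l1 restr
  rw [← Finset.sum_add_distrib]
  refine Finset.sum_congr rfl fun i _ => ?_
  by_cases h : i ∈ S <;> simp [h]

lemma l1_sub_le {n : ℕ} (u v : Fin n → ℝ) : l1 u - l1 v ≤ l1 (u + v) := by
  unfold l1
  rw [← Finset.sum_sub_distrib]
  refine Finset.sum_le_sum fun i _ => ?_
  have h : |u i| ≤ |u i + v i| + |v i| := by
    have := abs_add_le (u i + v i) (-(v i)); simpa using this
  simp only [Pi.add_apply]; linarith

/-- cone constraint for the ℓ1-penalty objective, λ > 1/2. -/
theorem stmt8 {N : ℕ} (x xh w : Fin N → ℝ) (s : ℕ)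
    (T₀ : Finset (Fin N)) (hT₀ : T₀.card = s)
    (z : Fin N → ℝ) (hz : z = xh - x)
    (lam : ℝ) (hlam₁ : 1 / 2 < lam) (hlam₂ : lam ≤ 1)
    (hopt : lam * l1 xh + (1 - lam) * l1 (xh - w) ≤ lam * l1 x + (1 - lam) * l1 (x - w)) :
    l1 (restr T₀ᶜ z) ≤ (1 / (2 * lam - 1)) * l1 (restr T₀ z)
      + (2 * lam / (2 * lam - 1)) * l1 (restr T₀ᶜ x) := by
  have hpos : 0 < 2 * lam - 1 := by linarith
  have hxh : xh = x + z := by funext i; simp [hz]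
  -- restriction is additive
  have hres : ∀ (S : Finset (Fin N)), restr S xh = restr S x + restr S z := by
    intro S; funext i; by_cases h : i ∈ S <;> simp [restr, h, hxh]
  -- lower bounds on pieces of l1 xh
  have h1 : l1 (restr T₀ x) - l1 (restr T₀ z) ≤ l1 (restr T₀ xh) := by
    rw [hres T₀]; exact l1_sub_le _ _
  have h2 : l1 (restr T₀ᶜ z) - l1 (restr T₀ᶜ x) ≤ l1 (restr T₀ᶜ xh) := by
    rw [hres T₀ᶜ, add_comm]; exact l1_sub_le _ _
  have h3 : l1 (x - w) - l1 z ≤ l1 (xh - w) := by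
    have : xh - w = (x - w) + z := by funext i; simp [hxh]; ring
    rw [this]; exact l1_sub_le _ _
  have hsxh := l1_split T₀ xh
  have hsx := l1_split T₀ x
  have hsz := l1_split T₀ z
  -- nonnegativity of the (1-lam) coefficient
  have hlam0 : 0 ≤ 1 - lam := by linarith
  -- combine
  have hkey : (2 * lam - 1) * l1 (restr T₀ᶜ z) ≤
      l1 (restr T₀ z) + 2 * lam * l1 (restr T₀ᶜ x) := by
    nlinarith [mul_le_mul_of_nonneg_left h3 hlam0,
      mul_le_mul_of_nonneg_left (add_le_add h1 h2) (le_of_lt (lt_trans (by norm_num : (0:ℝ) < 1/2) hlam₁))]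
  rw [show (1 / (2 * lam - 1)) * l1 (restr T₀ z)
      + (2 * lam / (2 * lam - 1)) * l1 (restr T₀ᶜ x)
      = (l1 (restr T₀ z) + 2 * lam * l1 (restr T₀ᶜ x)) / (2 * lam - 1) by ring,
    le_div_iff₀ hpos]
  linarith
end

section
/- Let x, x̂, w ∈ ℝ^N, T₀ a set of indices, z = x̂ - x, and suppose for some λ ∈ [0,1]: λ‖x̂‖₁ + (1-λ)‖x̂ - w‖₁ ≤ λ‖x‖₁ + (1-λ)‖x - w‖₁. Then ‖z_{T₀^c}‖₁ ≤ (2λ-1)‖z_{T₀}‖₁ + 2λ‖x_{T₀^c}‖₁ + 2(1-λ)‖x - w‖₁. -/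
open Finset

lemma l1_add_le {n : ℕ} (a b : Fin n → ℝ) : l1 (a + b) ≤ l1 a + l1 b := by
  simp only [l1, ← Finset.sum_add_distrib]
  exact Finset.sum_le_sum fun i _ => abs_add_le _ _

lemma l1_neg {n : ℕ} (a : Fin n → ℝ) : l1 (-a) = l1 a := by
  simp [l1]

/-- cone-type inequality for any λ ∈ [0,1]. -/
theorem stmt9 {N : ℕ} (x xh w : Fin N → ℝ)
    (T₀ : Finset (Fin N))
    (z : Fin N → ℝ) (hz : z = xh - x)
    (lam : ℝ) (hlam₁ : 0 ≤ lam) (hlam₂ : lam ≤ 1)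
    (hopt : lam * l1 xh + (1 - lam) * l1 (xh - w) ≤ lam * l1 x + (1 - lam) * l1 (x - w)) :
    l1 (restr T₀ᶜ z) ≤ (2 * lam - 1) * l1 (restr T₀ z)
      + 2 * lam * l1 (restr T₀ᶜ x) + 2 * (1 - lam) * l1 (x - w) := by
  subst hz
  -- A : l1 z ≤ l1 (xh - w) + l1 (x - w)
  have hA : l1 (xh - x) ≤ l1 (xh - w) + l1 (x - w) := by
    have := l1_add_le (xh - w) (-(x - w))
    have he : (xh - w) + (-(x - w)) = xh - x := by ring
    rw [he, l1_neg] at this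
    exact this
  -- B : l1 (restr T₀ x) ≤ l1 (restr T₀ xh) + l1 (restr T₀ (xh - x))
  have hrestr : ∀ (S : Finset (Fin N)) (a b : Fin N → ℝ),
      restr S (a - b) = restr S a - restr S b := by
    intro S a b
    funext i
    by_cases h : i ∈ S <;> simp [restr, h]
  have hB : l1 (restr T₀ x) ≤ l1 (restr T₀ xh) + l1 (restr T₀ (xh - x)) := by
    have := l1_add_le (restr T₀ xh) (-(restr T₀ (xh - x)))
    have he : restr T₀ xh + (-(restr T₀ (xh - x))) = restr T₀ x := by
      rw [hrestr]; ring
    rw [he, l1_neg] at this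
    exact this
  -- C : l1 (restr T₀ᶜ (xh - x)) ≤ l1 (restr T₀ᶜ xh) + l1 (restr T₀ᶜ x)
  have hC : l1 (restr T₀ᶜ (xh - x)) ≤ l1 (restr T₀ᶜ xh) + l1 (restr T₀ᶜ x) := by
    have := l1_add_le (restr T₀ᶜ xh) (-(restr T₀ᶜ x))
    have he : restr T₀ᶜ xh + (-(restr T₀ᶜ x)) = restr T₀ᶜ (xh - x) := by
      rw [hrestr]; ring
    rw [he] at this
    calc l1 (restr T₀ᶜ (xh - x)) ≤ l1 (restr T₀ᶜ xh) + l1 (-(restr T₀ᶜ x)) := this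
    _ = l1 (restr T₀ᶜ xh) + l1 (restr T₀ᶜ x) := by rw [l1_neg]
  have hD := l1_split T₀ xh
  have hE := l1_split T₀ x
  have hF := l1_split T₀ (xh - x)
  have h1 : 0 ≤ 1 - lam := by linarith
  nlinarith [mul_le_mul_of_nonneg_left hA h1, mul_le_mul_of_nonneg_left hB hlam₁,
    mul_le_mul_of_nonneg_left hC hlam₁]
end

section
/- Let x, x̂ ∈ ℝ^N, T₀ a set of s indices, z = x̂ - x, λ ∈ (1/2, 1], and suppose λ‖x̂‖₁ + (1-λ)‖x̂ - w‖₂ ≤ λ‖x‖₁ + (1-λ)‖x - w‖₂ for some w ∈ ℝ^N. Then ‖z_{T₀^c}‖₁ ≤ (1/(2λ-1))‖z_{T₀}‖₁ + (2λ/(2λ-1))‖x_{T₀^c}‖₁. -/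
open Finset

lemma l2_eq_norm {n : ℕ} (v : Fin n → ℝ) :
    l2 v = ‖(WithLp.equiv 2 (Fin n → ℝ)).symm v‖ := by
  rw [EuclideanSpace.norm_eq, l2]
  congr 1; exact Finset.sum_congr rfl (fun i _ => by rw [Real.norm_eq_abs, sq_abs]; rfl)

lemma l2_triangle {n : ℕ} (u v : Fin n → ℝ) : l2 (u + v) ≤ l2 u + l2 v := by
  simp only [l2_eq_norm]
  exact (norm_add_le _ _).trans_eq' (by congr)

/-- cone constraint for the ℓ2-penalty objective, λ > 1/2. -/
theorem stmt11 {N : ℕ} (x xh w : Fin N → ℝ) (s : ℕ)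
    (T₀ : Finset (Fin N)) (hT₀ : T₀.card = s)
    (z : Fin N → ℝ) (hz : z = xh - x)
    (lam : ℝ) (hlam₁ : 1 / 2 < lam) (hlam₂ : lam ≤ 1)
    (hopt : lam * l1 xh + (1 - lam) * l2 (xh - w) ≤ lam * l1 x + (1 - lam) * l2 (x - w)) :
    l1 (restr T₀ᶜ z) ≤ (1 / (2 * lam - 1)) * l1 (restr T₀ z)
      + (2 * lam / (2 * lam - 1)) * l1 (restr T₀ᶜ x) := by
  set A := l1 (restr T₀ z) with hA
  set B := l1 (restr T₀ᶜ z) with hB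
  set C := l1 (restr T₀ᶜ x) with hC
  set D := l1 (restr T₀ x) with hD
  have hxh : ∀ i, xh i = x i + z i := fun i => by simp [hz]
  have hzsplit : l1 z = A + B := l1_split T₀ z
  have hxsplit : l1 x = D + C := l1_split T₀ x
  have hAnn : 0 ≤ A := by rw [hA, l1_restr]; exact Finset.sum_nonneg fun i _ => abs_nonneg _
  have hBnn : 0 ≤ B := by rw [hB, l1_restr]; exact Finset.sum_nonneg fun i _ => abs_nonneg _
  have hCnn : 0 ≤ C := by rw [hC, l1_restr]; exact Finset.sum_nonneg fun i _ => abs_nonneg _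
  -- l2 (x - w) ≤ l2 (xh - w) + l1 z
  have h1 : l2 (x - w) ≤ l2 (xh - w) + l1 z := by
    have hxw : x - w = (xh - w) + (-z) := by
      funext i; simp [hz]
    calc l2 (x - w) = l2 ((xh - w) + (-z)) := by rw [hxw]
      _ ≤ l2 (xh - w) + l2 (-z) := l2_triangle _ _
      _ ≤ l2 (xh - w) + l1 z := by
          have : l2 (-z) = l2 z := by simp [l2]
          rw [this]; exact add_le_add_right (l2_le_l1 z) _
  -- lower bound for l1 xh
  have h2 : (D - A) + (B - C) ≤ l1 xh := by
    have e1 : D - A ≤ l1 (restr T₀ xh) := by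
      rw [hD, hA, l1_restr, l1_restr, l1_restr, ← Finset.sum_sub_distrib]
      refine Finset.sum_le_sum fun i _ => ?_
      rw [hxh i]
      simpa using abs_sub_abs_le_abs_sub (x i) (-(z i))
    have e2 : B - C ≤ l1 (restr T₀ᶜ xh) := by
      rw [hB, hC, l1_restr, l1_restr, l1_restr, ← Finset.sum_sub_distrib]
      refine Finset.sum_le_sum fun i _ => ?_
      rw [hxh i]
      calc |z i| - |x i| ≤ |z i + x i| := by
            simpa using abs_sub_abs_le_abs_sub (z i) (-(x i))
        _ = |x i + z i| := by rw [add_comm]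
    calc (D - A) + (B - C) ≤ l1 (restr T₀ xh) + l1 (restr T₀ᶜ xh) :=
          add_le_add e1 e2
      _ = l1 xh := (l1_split T₀ xh).symm
  have hlamnn : (0:ℝ) ≤ lam := by linarith
  have h1l : (0:ℝ) ≤ 1 - lam := by linarith
  have key : (2 * lam - 1) * B ≤ A + 2 * lam * C := by
    have h3 : lam * ((D - A) + (B - C)) ≤ lam * l1 xh :=
      mul_le_mul_of_nonneg_left h2 hlamnn
    have h4 : (1 - lam) * (l2 (x - w) - l2 (xh - w)) ≤ (1 - lam) * l1 z := by
      apply mul_le_mul_of_nonneg_left _ h1l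
      linarith
    nlinarith [hopt, h3, h4]
  have hpos : (0:ℝ) < 2 * lam - 1 := by linarith
  calc B = ((2 * lam - 1) * B) / (2 * lam - 1) := by field_simp
    _ ≤ (A + 2 * lam * C) / (2 * lam - 1) := by gcongr
    _ = (1 / (2 * lam - 1)) * A + (2 * lam / (2 * lam - 1)) * C := by
        field_simp
end
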